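/- A graph G is weakly closed if and only if its complement graph is a comparability graph. -/

import Mathlib

/-- A graph `G` is weakly closed if its vertices admit a labelling by `1, …, n` such that
for all `i < j < k`, if `{i, k}` is an edge then `{i, j}` or `{j, k}` is an edge. -/
def WeaklyClosed {V : Type} [Fintype V] (G : SimpleGraph V) : Prop :=
  ∃ f : V ≃ Fin (Fintype.card V), ∀ a b c : V,
    f a < f b → f b < f c → G.Adj a c → G.Adj a b ∨ G.Adj b c

/-- A comparability graph: a graph admitting a partial order on its vertex set such that two
distinct vertices are adjacent if and only if they are comparable. -/
def IsComparabilityGraph {V : Type} (G : SimpleGraph V) : Prop :=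
  ∃ r : V → V → Prop, IsPartialOrder V r ∧ ∀ a b, G.Adj a b ↔ a ≠ b ∧ (r a b ∨ r b a)

/-- A graph `G` is weakly closed if and only if its complement is a comparability graph. -/
theorem weaklyClosed_iff_compl_comparability {V : Type} [Fintype V] (G : SimpleGraph V) :
    WeaklyClosed G ↔ IsComparabilityGraph Gᶜ := by
  constructor
  · rintro ⟨f, hf⟩
    refine ⟨fun a b => a = b ∨ (f a < f b ∧ ¬ G.Adj a b),
      { refl := ?_, trans := ?_, antisymm := ?_ }, ?_⟩
    · exact fun a => Or.inl rfl
    · rintro a b c (rfl | ⟨hab, nab⟩) h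
      · exact h
      rcases h with rfl | ⟨hbc, nbc⟩
      · exact Or.inr ⟨hab, nab⟩
      refine Or.inr ⟨hab.trans hbc, fun hac => ?_⟩
      rcases hf a b c hab hbc hac with h | h
      · exact nab h
      · exact nbc h
    · rintro a b (rfl | ⟨hab, -⟩) h
      · rfl
      rcases h with rfl | ⟨hba, -⟩
      · rfl
      · exact absurd (hab.trans hba) (lt_irrefl _)
    · intro a b
      rw [SimpleGraph.compl_adj]
      constructor
      · rintro ⟨hne, nab⟩
        refine ⟨hne, ?_⟩
        rcases lt_or_gt_of_ne (fun h : f a = f b => hne (f.injective h)) with h | h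
        · exact Or.inl (Or.inr ⟨h, nab⟩)
        · exact Or.inr (Or.inr ⟨h, fun h' => nab h'.symm⟩)
      · rintro ⟨hne, (rfl | ⟨-, nab⟩) | (rfl | ⟨-, nba⟩)⟩
        · exact absurd rfl hne
        · exact ⟨hne, nab⟩
        · exact absurd rfl hne
        · exact ⟨hne, fun h => nba h.symm⟩
  · rintro ⟨r, hr, hadj⟩
    haveI := hr
    obtain ⟨s, hs, hrs⟩ := extend_partialOrder r
    haveI : IsLinearOrder V s := hs
    letI : LinearOrder V :=
      { le := s
        le_refl := fun a => refl_of s a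
        le_trans := fun a b c => trans_of s
        le_antisymm := fun a b => antisymm_of s
        le_total := total_of s
        toDecidableLE := fun a b => Classical.dec _ }
    let f := (Fintype.orderIsoFinOfCardEq V rfl).symm
    refine ⟨f.toEquiv, fun a b c hab hbc hac => ?_⟩
    by_contra hcon
    push_neg at hcon
    obtain ⟨nab, nbc⟩ := hcon
    have hab0 : a < b := f.lt_iff_lt.mp hab
    have hbc0 : b < c := f.lt_iff_lt.mp hbc
    have hab' : s a b := le_of_lt hab0
    have hbc' : s b c := le_of_lt hbc0
    have nab' : a ≠ b := fun h => absurd (congrArg f h) (ne_of_lt hab)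
    have nbc' : b ≠ c := fun h => absurd (congrArg f h) (ne_of_lt hbc)
    have key : ∀ x y : V, ¬ G.Adj x y → x ≠ y → s x y → r x y := by
      intro x y nxy hne hsxy
      have : r x y ∨ r y x :=
        ((hadj x y).mp ((SimpleGraph.compl_adj G x y).mpr ⟨hne, nxy⟩)).2
      rcases this with h | h
      · exact h
      · exact absurd (antisymm_of s hsxy (hrs _ _ h)) hne
    have rac : r a c := trans_of r (key a b nab nab' hab') (key b c nbc nbc' hbc')
    have : Gᶜ.Adj a c := (hadj a c).mpr ⟨fun h => G.loopless.irrefl _ (h ▸ hac), Or.inl rac⟩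
    exact this.2 hac
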